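/- Well-foundedness of the subterm-iterate relation (Lemma 3): Consider terms built from a set of generators using two binary operations · and ∘. The transitive closure of the relation relating u ≺ v when u is a proper subterm of v, or when v = a∘b and u = I_k(a,b) for some k ≥ 1 (where I₁(a,b)=a, I₂(a,b)=a·b, I_{n+2}(a,b)=I_{n+1}(a,b)·I_n(a,b) as terms), is a well-founded partial order on terms. -/
import Mathlib


/-- Terms over a set of generators with two binary operations · and ∘. -/
inductive Tm (α : Type*) : Type _
  | gen : α → Tm α
  | mul : Tm α → Tm α → Tm α
  | comp : Tm α → Tm α → Tm α

/-- (Reflexive) subterm relation. -/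
inductive Tm.Subt {α : Type*} : Tm α → Tm α → Prop
  | refl (a : Tm α) : Tm.Subt a a
  | mulL {u a b : Tm α} : Tm.Subt u a → Tm.Subt u (Tm.mul a b)
  | mulR {u a b : Tm α} : Tm.Subt u b → Tm.Subt u (Tm.mul a b)
  | compL {u a b : Tm α} : Tm.Subt u a → Tm.Subt u (Tm.comp a b)
  | compR {u a b : Tm α} : Tm.Subt u b → Tm.Subt u (Tm.comp a b)

/-- Proper subterm. -/
def Tm.PSubt {α : Type*} (u v : Tm α) : Prop := u ≠ v ∧ Tm.Subt u v

/-- Iterates of a pair of terms: I₁(a,b)=a, I₂(a,b)=a·b, I_{n+2}=I_{n+1}·I_n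
(I₀ is a dummy value). -/
def Tm.iter {α : Type*} : ℕ → Tm α → Tm α → Tm α
  | 0, a, _ => a
  | 1, a, _ => a
  | 2, a, b => Tm.mul a b
  | n + 3, a, b => Tm.mul (Tm.iter (n + 2) a b) (Tm.iter (n + 1) a b)

/-- The base relation of Lemma 3: u ≺₀ v iff u is a proper subterm of v, or
v = a∘b and u = I_k(a,b) for some k ≥ 1. -/
def Tm.prec0 {α : Type*} (u v : Tm α) : Prop :=
  Tm.PSubt u v ∨ ∃ (a b : Tm α) (k : ℕ), 1 ≤ k ∧ v = Tm.comp a b ∧ u = Tm.iter k a b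


/-- Number of comps, counting mul as max. -/
def Tm.csize {α : Type*} : Tm α → ℕ
  | .gen _ => 0
  | .mul a b => max a.csize b.csize
  | .comp a b => a.csize + b.csize + 1

/-- Size. -/
def Tm.tsize {α : Type*} : Tm α → ℕ
  | .gen _ => 1
  | .mul a b => a.tsize + b.tsize + 1
  | .comp a b => a.tsize + b.tsize + 1

lemma Tm.subt_csize {α : Type*} {u v : Tm α} (h : u.Subt v) : u.csize ≤ v.csize := by
  induction h with
  | refl => exact le_rfl
  | mulL _ ih => exact ih.trans (by simp [Tm.csize])
  | mulR _ ih => exact ih.trans (by simp [Tm.csize])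
  | compL _ ih => exact ih.trans (by simp [Tm.csize]; omega)
  | compR _ ih => exact ih.trans (by simp [Tm.csize]; omega)

lemma Tm.subt_tsize {α : Type*} {u v : Tm α} (h : u.Subt v) : u = v ∨ u.tsize < v.tsize := by
  induction h with
  | refl => exact Or.inl rfl
  | mulL _ ih => right; rcases ih with rfl | h <;> simp [Tm.tsize] <;> omega
  | mulR _ ih => right; rcases ih with rfl | h <;> simp [Tm.tsize] <;> omega
  | compL _ ih => right; rcases ih with rfl | h <;> simp [Tm.tsize] <;> omega
  | compR _ ih => right; rcases ih with rfl | h <;> simp [Tm.tsize] <;> omega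

lemma Tm.iter_csize {α : Type*} (a b : Tm α) :
    ∀ k, (Tm.iter k a b).csize ≤ max a.csize b.csize
  | 0 => le_max_left _ _
  | 1 => le_max_left _ _
  | 2 => by simp [Tm.iter, Tm.csize]
  | (n+3) => by
      have h1 := Tm.iter_csize a b (n+2)
      have h2 := Tm.iter_csize a b (n+1)
      simp only [Tm.iter, Tm.csize]
      omega

/-- Lexicographic measure relation. -/
def Tm.key {α : Type*} (u v : Tm α) : Prop :=
  u.csize < v.csize ∨ (u.csize = v.csize ∧ u.tsize < v.tsize)

lemma Tm.key_wf {α : Type*} : WellFounded (Tm.key (α := α)) := by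
  have hw : WellFounded (InvImage (Prod.Lex (· < ·) (· < ·))
      (fun t : Tm α => (t.csize, t.tsize))) :=
    InvImage.wf _ (WellFounded.prod_lex wellFounded_lt wellFounded_lt)
  refine Subrelation.wf (fun {u v} h => ?_) hw
  rcases h with h | ⟨h1, h2⟩
  · exact Prod.Lex.left _ _ h
  · show Prod.Lex _ _ (u.csize, u.tsize) (v.csize, v.tsize)
    rw [h1]; exact Prod.Lex.right _ h2

lemma Tm.key_trans {α : Type*} {u v w : Tm α} (h1 : Tm.key u v) (h2 : Tm.key v w) :
    Tm.key u w := by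
  unfold Tm.key at *; omega

lemma Tm.prec0_key {α : Type*} {u v : Tm α} (h : Tm.prec0 u v) : Tm.key u v := by
  rcases h with ⟨hne, hs⟩ | ⟨a, b, k, hk, rfl, rfl⟩
  · have h1 := Tm.subt_csize hs
    have h2 := Tm.subt_tsize hs
    rcases h2 with rfl | h2
    · exact absurd rfl hne
    · unfold Tm.key; omega
  · left
    have := Tm.iter_csize a b k
    simp only [Tm.csize] at *
    omega

/-- Lemma 3: the transitive closure of ≺₀ is a well-founded (strict partial) order. -/
theorem Tm.transGen_prec0_wellFounded {α : Type*} :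
    WellFounded (Relation.TransGen (Tm.prec0 (α := α))) := by
  refine Subrelation.wf (fun {u v} h => ?_) Tm.key_wf
  induction h with
  | single h => exact Tm.prec0_key h
  | tail _ h ih => exact Tm.key_trans ih (Tm.prec0_key h)
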